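/- For symmetric matrices X and Y, every eigenvalue of X + Y lies within ‖Y‖₂ of some eigenvalue of X; in particular, if the eigenvalues of X lie in [a,b], the eigenvalues of X+Y lie in [a − ‖Y‖₂, b + ‖Y‖₂] (Weyl's inequality used in Section 6). -/

import Mathlib

open Matrix

/-- The spectral norm (ℓ²-operator norm) of a real square matrix. -/
noncomputable def matrixSpectralNorm (n : ℕ) (M : Matrix (Fin n) (Fin n) ℝ) : ℝ :=
  ‖LinearMap.toContinuousLinearMap (Matrix.toEuclideanLin M)‖

/-- Key step: every eigenvalue of `X + Y` lies within `‖Y‖₂` of some eigenvalue of `X`. -/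
theorem weyl_aux (n : ℕ) (X Y : Matrix (Fin n) (Fin n) ℝ)
    (hX : X.IsHermitian) (hXY : (X + Y).IsHermitian) (i : Fin n) :
    ∃ j, |hXY.eigenvalues i - hX.eigenvalues j| ≤ matrixSpectralNorm n Y := by
  classical
  set μ := hXY.eigenvalues i with hμ
  set v : EuclideanSpace ℝ (Fin n) := hXY.eigenvectorBasis i with hv
  have hv1 : ‖v‖ = 1 := hXY.eigenvectorBasis.orthonormal.1 i
  have h1 : Matrix.toEuclideanLin (X + Y) v = μ • v := by
    have h := hXY.mulVec_eigenvectorBasis i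
    ext k
    have := congrFun h k
    simpa [Matrix.toEuclideanLin_apply, Matrix.add_mulVec, hv, hμ] using this
  set w : EuclideanSpace ℝ (Fin n) := Matrix.toEuclideanLin X v - μ • v with hwdef
  have hsum : Matrix.toEuclideanLin X v + Matrix.toEuclideanLin Y v = μ • v := by
    rw [← LinearMap.add_apply, ← map_add]; exact h1
  have hw : w = - Matrix.toEuclideanLin Y v := by
    rw [hwdef, ← hsum]; abel
  -- norm bound on w
  have hwle : ‖w‖ ≤ matrixSpectralNorm n Y := by
    rw [hw, norm_neg]
    calc ‖Matrix.toEuclideanLin Y v‖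
        = ‖LinearMap.toContinuousLinearMap (Matrix.toEuclideanLin Y) v‖ := rfl
      _ ≤ matrixSpectralNorm n Y * ‖v‖ := ContinuousLinearMap.le_opNorm _ _
      _ = matrixSpectralNorm n Y := by rw [hv1, mul_one]
  -- Parseval
  set b := hX.eigenvectorBasis with hb
  have hXb : ∀ j, Matrix.toEuclideanLin X (b j) = hX.eigenvalues j • (b j) := by
    intro j
    have h := hX.mulVec_eigenvectorBasis j
    ext k
    have := congrFun h k
    simpa [Matrix.toEuclideanLin_apply] using this
  have hXsym := (Matrix.isHermitian_iff_isSymmetric.1 hX)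
  have hrepr : ∀ j, b.repr w j = (hX.eigenvalues j - μ) * b.repr v j := by
    intro j
    rw [OrthonormalBasis.repr_apply_apply, OrthonormalBasis.repr_apply_apply, hwdef]
    rw [inner_sub_right, inner_smul_right]
    have : (inner ℝ (b j) (Matrix.toEuclideanLin X v) : ℝ)
        = hX.eigenvalues j * inner ℝ (b j) v := by
      rw [← hXsym (b j) v, hXb j, inner_smul_left]
      simp [RCLike.star_def]
    rw [this]; ring
  -- norms squared
  have hnw : ‖w‖ ^ 2 = ∑ j, (hX.eigenvalues j - μ)^2 * (b.repr v j)^2 := by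
    rw [← b.repr.norm_map w, EuclideanSpace.norm_eq, Real.sq_sqrt (by positivity)]
    refine Finset.sum_congr rfl fun j _ => ?_
    rw [hrepr j]
    simp [Real.norm_eq_abs, mul_pow, sq_abs]
  have hnv : (1:ℝ) = ∑ j, (b.repr v j)^2 := by
    rw [← one_pow 2, ← hv1, ← b.repr.norm_map v, EuclideanSpace.norm_eq,
      Real.sq_sqrt (by positivity)]
    exact Finset.sum_congr rfl fun j _ => by simp [Real.norm_eq_abs, sq_abs]
  -- pick minimizing j
  obtain ⟨j0, -, hj0⟩ := Finset.exists_min_image Finset.univ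
    (fun j => |μ - hX.eigenvalues j|) ⟨i, Finset.mem_univ i⟩
  refine ⟨j0, ?_⟩
  have key : (μ - hX.eigenvalues j0)^2 ≤ ‖w‖^2 := by
    calc (μ - hX.eigenvalues j0)^2
        = ∑ j, (μ - hX.eigenvalues j0)^2 * (b.repr v j)^2 := by
          rw [← Finset.mul_sum, ← hnv, mul_one]
      _ ≤ ∑ j, (hX.eigenvalues j - μ)^2 * (b.repr v j)^2 := by
          refine Finset.sum_le_sum fun j _ => ?_
          have h1 := hj0 j (Finset.mem_univ j)
          have : (μ - hX.eigenvalues j0)^2 ≤ (hX.eigenvalues j - μ)^2 := by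
            rw [← sq_abs (μ - hX.eigenvalues j0), ← sq_abs (hX.eigenvalues j - μ),
              abs_sub_comm (hX.eigenvalues j)]
            exact pow_le_pow_left₀ (abs_nonneg _) h1 2
          exact mul_le_mul_of_nonneg_right this (sq_nonneg _)
      _ = ‖w‖^2 := hnw.symm
  have hwn : (0:ℝ) ≤ matrixSpectralNorm n Y := le_trans (norm_nonneg w) hwle
  nlinarith [abs_nonneg (μ - hX.eigenvalues j0), sq_abs (μ - hX.eigenvalues j0),
    norm_nonneg w, key, hwle, hwn]

/-- Weyl's inequality, as used in Section 6: for symmetric matrices `X` and `Y`,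
every eigenvalue of `X + Y` lies within `‖Y‖₂` of some eigenvalue of `X`; in
particular, if the eigenvalues of `X` lie in `[a, b]`, the eigenvalues of `X + Y`
lie in `[a − ‖Y‖₂, b + ‖Y‖₂]`. -/
theorem weyl_eigenvalue_perturbation (n : ℕ)
    (X Y : Matrix (Fin n) (Fin n) ℝ)
    (hX : X.IsHermitian) (hY : Y.IsHermitian) (hXY : (X + Y).IsHermitian) :
    (∀ i : Fin n, ∃ j : Fin n,
      |hXY.eigenvalues i - hX.eigenvalues j| ≤ matrixSpectralNorm n Y) ∧
    ∀ a b : ℝ, (∀ j : Fin n, hX.eigenvalues j ∈ Set.Icc a b) →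
      ∀ i : Fin n, hXY.eigenvalues i ∈
        Set.Icc (a - matrixSpectralNorm n Y) (b + matrixSpectralNorm n Y) := by
  refine ⟨fun i => weyl_aux n X Y hX hXY i, fun a b hab i => ?_⟩
  obtain ⟨j, hj⟩ := weyl_aux n X Y hX hXY i
  obtain ⟨h1, h2⟩ := abs_le.mp hj
  obtain ⟨ha, hb⟩ := hab j
  exact ⟨by linarith, by linarith⟩
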